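/- For every integer n ≥ 2, Σ_{σ ∈ 𝒬̂_{n+1}} (−1)^{cyc(σ)} = n − 1. -/

import Mathlib

open Finset

/-- `fixp(σ)`: the number of fixed points of `σ`. -/
def fixp {n : ℕ} (σ : Equiv.Perm (Fin n)) : ℕ :=
  (Finset.univ.filter fun i => σ i = i).card

/-- `cyc(σ)`: the number of cycles of `σ`, fixed points counted. -/
def cyc {n : ℕ} (σ : Equiv.Perm (Fin n)) : ℕ :=
  σ.cycleType.card + fixp σ

/-- `𝒬̂_{m+1}`: permutations `σ` of `{1, …, m+1}` such that every element `x` other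
than the largest element in the cycle of `σ` containing the largest element
satisfies `σ(x) > x`. -/
noncomputable def Qhat (m : ℕ) : Finset (Equiv.Perm (Fin (m + 1))) :=
  Finset.univ.filter fun σ =>
    ∀ x, σ.SameCycle x (Fin.last m) → x ≠ Fin.last m → x < σ x

open Equiv Equiv.Perm

open scoped Classical in
noncomputable def Fset {n : ℕ} (σ : Perm (Fin (n + 1))) : Finset (Fin (n + 1)) :=
  Finset.univ.filter fun x => ¬ σ.SameCycle x (Fin.last n)

lemma mem_Fset {n : ℕ} {σ : Perm (Fin (n + 1))} {x : Fin (n + 1)} :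
    x ∈ Fset σ ↔ ¬ σ.SameCycle x (Fin.last n) := by
  classical simp [Fset]

lemma mem_Qhat {n : ℕ} {σ : Perm (Fin (n + 1))} :
    σ ∈ Qhat n ↔ ∀ x, σ.SameCycle x (Fin.last n) → x ≠ Fin.last n → x < σ x := by
  classical simp [Qhat]

lemma pow_mul_swap {n : ℕ} {σ : Perm (Fin (n + 1))} {a b : Fin (n + 1)}
    (ha : ¬ σ.SameCycle a (Fin.last n)) (hb : ¬ σ.SameCycle b (Fin.last n)) :
    ∀ k : ℕ, ((σ * Equiv.swap a b) ^ k) (Fin.last n) = (σ ^ k) (Fin.last n) := by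
  intro k
  induction k with
  | zero => rfl
  | succ k ih =>
    have hsc : σ.SameCycle (Fin.last n) ((σ ^ k) (Fin.last n)) :=
      ⟨(k : ℤ), by rw [zpow_natCast]⟩
    have hna : (σ ^ k) (Fin.last n) ≠ a := fun h => ha (by rw [← h]; exact hsc.symm)
    have hnb : (σ ^ k) (Fin.last n) ≠ b := fun h => hb (by rw [← h]; exact hsc.symm)
    rw [pow_succ', Equiv.Perm.mul_apply, ih, Equiv.Perm.mul_apply,
      Equiv.swap_apply_of_ne_of_ne hna hnb, ← Equiv.Perm.mul_apply, ← pow_succ']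

lemma sameCycle_mul_swap_iff {n : ℕ} {σ : Perm (Fin (n + 1))} {a b : Fin (n + 1)}
    (ha : ¬ σ.SameCycle a (Fin.last n)) (hb : ¬ σ.SameCycle b (Fin.last n)) (x : Fin (n + 1)) :
    (σ * Equiv.swap a b).SameCycle x (Fin.last n) ↔ σ.SameCycle x (Fin.last n) := by
  constructor
  · intro h
    obtain ⟨i, -, hi⟩ := h.symm.exists_pow_eq'
    exact Equiv.Perm.SameCycle.symm
      ⟨(i : ℤ), by rw [zpow_natCast, ← pow_mul_swap ha hb, hi]⟩
  · intro h
    obtain ⟨i, -, hi⟩ := h.symm.exists_pow_eq'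
    exact Equiv.Perm.SameCycle.symm
      ⟨(i : ℤ), by rw [zpow_natCast, pow_mul_swap ha hb, hi]⟩

lemma Fset_mul_swap {n : ℕ} {σ : Perm (Fin (n + 1))} {a b : Fin (n + 1)}
    (ha : a ∈ Fset σ) (hb : b ∈ Fset σ) :
    Fset (σ * Equiv.swap a b) = Fset σ := by
  ext x
  rw [mem_Fset, mem_Fset, sameCycle_mul_swap_iff (mem_Fset.1 ha) (mem_Fset.1 hb)]

lemma Qhat_mul_swap {n : ℕ} {σ : Perm (Fin (n + 1))} (hσ : σ ∈ Qhat n)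
    {a b : Fin (n + 1)} (ha : a ∈ Fset σ) (hb : b ∈ Fset σ) :
    σ * Equiv.swap a b ∈ Qhat n := by
  rw [mem_Qhat] at hσ ⊢
  intro x hx hxl
  have hx' : σ.SameCycle x (Fin.last n) :=
    (sameCycle_mul_swap_iff (mem_Fset.1 ha) (mem_Fset.1 hb) x).1 hx
  have hxa : x ≠ a := fun h => (mem_Fset.1 ha) (h ▸ hx')
  have hxb : x ≠ b := fun h => (mem_Fset.1 hb) (h ▸ hx')
  have heq : (σ * Equiv.swap a b) x = σ x := by
    rw [Equiv.Perm.mul_apply, Equiv.swap_apply_of_ne_of_ne hxa hxb]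
  rw [heq]
  exact hσ x hx' hxl

lemma neg_one_pow_cyc {n : ℕ} (σ : Perm (Fin (n + 1))) :
    (-1 : ℤ) ^ cyc σ = (-1) ^ (n + 1) * (Perm.sign σ : ℤ) := by
  classical
  have hfix : fixp σ + σ.support.card = n + 1 := by
    have hsupp : σ.support = Finset.univ.filter (fun x => ¬ σ x = x) := by
      ext x; simp [Equiv.Perm.mem_support]
    rw [fixp, hsupp]
    rw [Finset.card_filter_add_card_filter_not]
    simp
  have hsum := Equiv.Perm.sum_cycleType σ
  have he : cyc σ + 2 * σ.support.card
      = (n + 1) + (σ.cycleType.sum + Multiset.card σ.cycleType) := by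
    rw [hsum]; unfold cyc; omega
  have h2 : (-1 : ℤ) ^ (cyc σ + 2 * σ.support.card) = (-1 : ℤ) ^ cyc σ := by
    rw [pow_add, pow_mul]; norm_num
  have hsign : (Perm.sign σ : ℤ)
      = (-1 : ℤ) ^ (σ.cycleType.sum + Multiset.card σ.cycleType) := by
    rw [Equiv.Perm.sign_of_cycleType σ]
    push_cast
    ring
  rw [← h2, he, pow_add, hsign]

lemma eq_of_agree_off {α : Type*} (σ τ : Equiv.Perm α) (a : α)
    (h : ∀ x, x ≠ a → σ x = τ x) : σ = τ := by
  have key : σ a = τ a := by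
    obtain ⟨c, hc⟩ := τ.surjective (σ a)
    rcases eq_or_ne c a with rfl | hca
    · exact hc.symm
    · exact absurd (σ.injective (by rw [h c hca, hc])) hca
  ext x
  rcases eq_or_ne x a with rfl | hx
  · exact key
  · exact h x hx

lemma incr_eq_add_one {N : ℕ} {f : Fin (N + 1) → Fin (N + 1)} (hf : Function.Injective f)
    (h : ∀ x : Fin (N + 1), x ≠ Fin.last N → x < f x) :
    ∀ x : Fin (N + 1), x ≠ Fin.last N → (f x).val = x.val + 1 := by
  suffices H : ∀ k : ℕ, ∀ x : Fin (N + 1), x.val + (k + 2) = N + 1 → (f x).val = x.val + 1 by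
    intro x hx
    have hxv : x.val ≠ N := fun hh => hx (Fin.ext (by rw [hh, Fin.val_last]))
    have := x.is_lt
    have hlast : (Fin.last N).val = N := Fin.val_last N
    exact H (N - 1 - x.val) x (by omega)
  intro k
  induction k using Nat.strong_induction_on with
  | _ k ih =>
  intro x hx
  have hlast : (Fin.last N).val = N := Fin.val_last N
  have hxL : x ≠ Fin.last N := by
    intro hh
    rw [hh, Fin.val_last] at hx
    omega
  have hlt : x.val < (f x).val := h x hxL
  by_contra hne
  have hfb : (f x).val ≤ N := Nat.lt_succ_iff.mp (f x).is_lt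
  have hge : x.val + 2 ≤ (f x).val := by omega
  set y : Fin (N + 1) := ⟨(f x).val - 1, by omega⟩ with hy
  have hyv : y.val = (f x).val - 1 := rfl
  have h2 : (f y).val = y.val + 1 := ih (N - y.val - 1) (by omega) y (by rw [hyv]; omega)
  have h3 : f y = f x := Fin.ext (by rw [h2, hyv]; omega)
  have h4 := congrArg Fin.val (hf h3)
  rw [hyv] at h4
  omega

lemma incr_eq_add_one' {N : ℕ} {f : Fin (N + 1) → Fin (N + 1)} (hf : Function.Injective f)
    {j : Fin (N + 1)} (hjL : j ≠ Fin.last N) (hfj : f j = j)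
    (h : ∀ x : Fin (N + 1), x ≠ Fin.last N → x ≠ j → x < f x) :
    ∀ x : Fin (N + 1), x ≠ Fin.last N → x ≠ j →
      (f x).val = if x.val + 1 = j.val then x.val + 2 else x.val + 1 := by
  have hjv : j.val ≠ N := fun hh => hjL (Fin.ext (by rw [hh, Fin.val_last]))
  have hjlt := j.is_lt
  suffices H : ∀ k : ℕ, ∀ x : Fin (N + 1), x.val + (k + 2) = N + 1 → x ≠ j →
      (f x).val = if x.val + 1 = j.val then x.val + 2 else x.val + 1 by
    intro x hx hxj
    have hxv : x.val ≠ N := fun hh => hx (Fin.ext (by rw [hh, Fin.val_last]))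
    have := x.is_lt
    have hlast : (Fin.last N).val = N := Fin.val_last N
    exact H (N - 1 - x.val) x (by omega) hxj
  intro k
  induction k using Nat.strong_induction_on with
  | _ k ih =>
  intro x hx hxj
  have hlast : (Fin.last N).val = N := Fin.val_last N
  have hxL : x ≠ Fin.last N := by
    intro hh
    rw [hh, Fin.val_last] at hx
    omega
  have hlt : x.val < (f x).val := h x hxL hxj
  have hfxj : (f x).val ≠ j.val := by
    intro hh
    have hfx : f x = f j := by rw [hfj]; exact Fin.ext hh
    exact hxj (hf hfx)
  have hfb : (f x).val ≤ N := Nat.lt_succ_iff.mp (f x).is_lt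
  by_contra hne
  rcases eq_or_ne (x.val + 1) j.val with hcase | hcase
  · rw [if_pos hcase] at hne
    have hge : x.val + 3 ≤ (f x).val := by omega
    set y : Fin (N + 1) := ⟨(f x).val - 1, by omega⟩ with hy
    have hyv : y.val = (f x).val - 1 := rfl
    have hyj : y ≠ j := fun hh => by
      have := congrArg Fin.val hh
      rw [hyv] at this
      omega
    have h2 := ih (N - y.val - 1) (by omega) y (by rw [hyv]; omega) hyj
    rw [if_neg (by rw [hyv]; omega)] at h2
    have h3 : f y = f x := Fin.ext (by rw [h2, hyv]; omega)
    have h4 := congrArg Fin.val (hf h3)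
    rw [hyv] at h4
    omega
  · rw [if_neg hcase] at hne
    have hge : x.val + 2 ≤ (f x).val := by omega
    rcases eq_or_ne ((f x).val) (j.val + 1) with hc2 | hc2
    · -- f x = j + 1; use y' = j - 1
      set y : Fin (N + 1) := ⟨j.val - 1, by omega⟩ with hy
      have hyv : y.val = j.val - 1 := rfl
      have hyj : y ≠ j := fun hh => by
        have := congrArg Fin.val hh
        rw [hyv] at this
        omega
      have h2 := ih (N - y.val - 1) (by omega) y (by rw [hyv]; omega) hyj
      rw [if_pos (by rw [hyv]; omega)] at h2
      have h3 : f y = f x := Fin.ext (by rw [h2, hyv]; omega)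
      have h4 := congrArg Fin.val (hf h3)
      rw [hyv] at h4
      omega
    · set y : Fin (N + 1) := ⟨(f x).val - 1, by omega⟩ with hy
      have hyv : y.val = (f x).val - 1 := rfl
      have hyj : y ≠ j := fun hh => by
        have := congrArg Fin.val hh
        rw [hyv] at this
        omega
      have h2 := ih (N - y.val - 1) (by omega) y (by rw [hyv]; omega) hyj
      rw [if_neg (by rw [hyv]; omega)] at h2
      have h3 : f y = f x := Fin.ext (by rw [h2, hyv]; omega)
      have h4 := congrArg Fin.val (hf h3)
      rw [hyv] at h4
      omega

def sigP {n : ℕ} (j : Fin (n + 1)) : Equiv.Perm (Fin (n + 1)) :=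
  Equiv.swap j (j + 1) * finRotate (n + 1)

-- small Fin facts in Fin (m+3)
lemma fin_add_one_ne {m : ℕ} (x : Fin (m + 3)) : x + 1 ≠ x := by
  intro hh
  have h2 := congrArg Fin.val hh
  rw [Fin.val_add_one] at h2
  split_ifs at h2 with h
  · rw [h, Fin.val_last] at h2
    omega
  · omega

lemma fin_add_two_ne {m : ℕ} (x : Fin (m + 3)) : x + 1 + 1 ≠ x := by
  intro hh
  have h2 := congrArg Fin.val hh
  rw [Fin.val_add_one, Fin.val_add_one] at h2
  split_ifs at h2 with ha hb
  · have ha2 := congrArg Fin.val ha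
    rw [Fin.val_add_one, Fin.val_last] at ha2
    split_ifs at ha2 with hc
    all_goals omega
  · rw [hb, Fin.val_last] at h2
    omega
  · omega

lemma sigP_apply {m : ℕ} (j x : Fin (m + 3)) :
    sigP j x = Equiv.swap j (j + 1) (x + 1) := by
  rw [sigP, Equiv.Perm.mul_apply, finRotate_succ_apply]

lemma sigP_apply_self {m : ℕ} (j : Fin (m + 3)) : sigP j j = j := by
  rw [sigP_apply, Equiv.swap_apply_right]

lemma sigP_ne {m : ℕ} {j x : Fin (m + 3)} (hx : x ≠ j) : sigP j x ≠ x := by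
  rw [sigP_apply]
  rcases eq_or_ne (x + 1) j with h1 | h1
  · rw [h1, Equiv.swap_apply_left]
    intro hh
    exact fin_add_two_ne j (by rw [hh]; exact h1)
  · have h2 : x + 1 ≠ j + 1 := fun hh => hx (add_right_cancel hh)
    rw [Equiv.swap_apply_of_ne_of_ne h1 h2]
    exact fin_add_one_ne x

lemma isCycle_sigP {m : ℕ} (j : Fin (m + 3)) : (sigP j).IsCycle := by
  have h1 : finRotate (m + 3) j = j + 1 := finRotate_succ_apply j
  have hx : finRotate (m + 3) j ≠ j := by rw [h1]; exact fin_add_one_ne j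
  have hffx : finRotate (m + 3) (finRotate (m + 3) j) ≠ j := by
    rw [h1, finRotate_succ_apply]
    exact fin_add_two_ne j
  have := Equiv.Perm.IsCycle.swap_mul (isCycle_finRotate (n := m + 1)) hx hffx
  rw [h1] at this
  exact this

lemma not_sameCycle_of_fixed {n : ℕ} {σ : Equiv.Perm (Fin (n + 1))} {x : Fin (n + 1)}
    (hfix : σ x = x) (hx : x ≠ Fin.last n) : ¬ σ.SameCycle x (Fin.last n) := by
  rintro ⟨k, hk⟩
  rw [Equiv.Perm.zpow_apply_eq_self_of_apply_eq_self hfix] at hk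
  exact hx hk

lemma sameCycle_sigP {m : ℕ} {j x : Fin (m + 3)} (hj : j ≠ Fin.last (m + 2))
    (hx : x ≠ j) : (sigP j).SameCycle x (Fin.last (m + 2)) :=
  (isCycle_sigP j).sameCycle (sigP_ne hx) (sigP_ne (Ne.symm hj))

lemma sameCycle_full {m : ℕ} (x : Fin (m + 3)) :
    (finRotate (m + 3)).SameCycle x (Fin.last (m + 2)) := by
  have hne : ∀ y : Fin (m + 3), finRotate (m + 3) y ≠ y := by
    intro y
    rw [finRotate_succ_apply]
    exact fin_add_one_ne y
  exact (isCycle_finRotate (n := m + 1)).sameCycle (hne x) (hne _)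

lemma full_mem {m : ℕ} : finRotate (m + 3) ∈ Qhat (m + 2) := by
  rw [mem_Qhat]
  intro x _ hxl
  rw [finRotate_succ_apply, Fin.lt_def, Fin.val_add_one, if_neg hxl]
  omega

lemma Fset_full {m : ℕ} : Fset (finRotate (m + 3)) = (∅ : Finset (Fin (m + 3))) := by
  ext x
  simp only [Finset.notMem_empty, iff_false, mem_Fset, not_not]
  exact sameCycle_full x

lemma sigP_mem {m : ℕ} {j : Fin (m + 3)} (hj : j ≠ Fin.last (m + 2)) :
    sigP j ∈ Qhat (m + 2) := by
  rw [mem_Qhat]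
  intro x hsc hxl
  have hxj : x ≠ j := by
    rintro rfl
    exact not_sameCycle_of_fixed (sigP_apply_self x) hj hsc
  rw [sigP_apply, Fin.lt_def]
  have hx1 : (x + 1).val = x.val + 1 := by rw [Fin.val_add_one, if_neg hxl]
  rcases eq_or_ne (x + 1) j with h1 | h1
  · rw [h1, Equiv.swap_apply_left, Fin.val_add_one, if_neg hj]
    have := congrArg Fin.val h1
    rw [hx1] at this
    omega
  · have h2 : x + 1 ≠ j + 1 := fun hh => hxj (add_right_cancel hh)
    rw [Equiv.swap_apply_of_ne_of_ne h1 h2, hx1]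
    omega

lemma Fset_sigP {m : ℕ} {j : Fin (m + 3)} (hj : j ≠ Fin.last (m + 2)) :
    Fset (sigP j) = {j} := by
  ext x
  simp only [Finset.mem_singleton, mem_Fset]
  constructor
  · intro hns
    by_contra hxj
    exact hns (sameCycle_sigP hj hxj)
  · rintro rfl
    exact not_sameCycle_of_fixed (sigP_apply_self x) hj

lemma uniq_full {m : ℕ} {σ : Equiv.Perm (Fin (m + 3))} (hσ : σ ∈ Qhat (m + 2))
    (hF : Fset σ = ∅) : σ = finRotate (m + 3) := by
  have hall : ∀ x, σ.SameCycle x (Fin.last (m + 2)) := by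
    intro x
    by_contra hc
    have : x ∈ Fset σ := mem_Fset.2 hc
    rw [hF] at this
    exact Finset.notMem_empty x this
  have h : ∀ x : Fin (m + 3), x ≠ Fin.last (m + 2) → x < σ x :=
    fun x hx => (mem_Qhat.1 hσ) x (hall x) hx
  have key := incr_eq_add_one σ.injective h
  apply eq_of_agree_off _ _ (Fin.last (m + 2))
  intro x hx
  apply Fin.ext
  rw [key x hx, finRotate_succ_apply, Fin.val_add_one, if_neg hx]

lemma uniq_sig {m : ℕ} {σ : Equiv.Perm (Fin (m + 3))} (hσ : σ ∈ Qhat (m + 2))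
    {j : Fin (m + 3)} (hF : Fset σ = {j}) :
    j ≠ Fin.last (m + 2) ∧ σ = sigP j := by
  have hjF : j ∈ Fset σ := by rw [hF]; exact Finset.mem_singleton_self j
  have hjL : j ≠ Fin.last (m + 2) := by
    rintro rfl
    exact (mem_Fset.1 hjF) (Equiv.Perm.SameCycle.refl σ (Fin.last (m + 2)))
  have hfix : σ j = j := by
    have : σ j ∈ Fset σ := by
      rw [mem_Fset]
      intro hsc
      exact (mem_Fset.1 hjF) (Equiv.Perm.sameCycle_apply_left.mp hsc)
    rw [hF, Finset.mem_singleton] at this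
    exact this
  have h : ∀ x : Fin (m + 3), x ≠ Fin.last (m + 2) → x ≠ j → x < σ x := by
    intro x hxl hxj
    have hsc : σ.SameCycle x (Fin.last (m + 2)) := by
      by_contra hc
      have : x ∈ Fset σ := mem_Fset.2 hc
      rw [hF, Finset.mem_singleton] at this
      exact hxj this
    exact (mem_Qhat.1 hσ) x hsc hxl
  refine ⟨hjL, ?_⟩
  have key := incr_eq_add_one' σ.injective hjL hfix h
  apply eq_of_agree_off _ _ (Fin.last (m + 2))
  intro x hxl
  rcases eq_or_ne x j with rfl | hxj
  · rw [hfix, sigP_apply_self]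
  · have hx1 : (x + 1).val = x.val + 1 := by rw [Fin.val_add_one, if_neg hxl]
    have hj1 : (j + 1).val = j.val + 1 := by rw [Fin.val_add_one, if_neg hjL]
    apply Fin.ext
    rw [key x hxl hxj, sigP_apply]
    rcases eq_or_ne (x + 1) j with h1 | h1
    · have hv := congrArg Fin.val h1
      rw [hx1] at hv
      rw [h1, Equiv.swap_apply_left, if_pos hv, hj1]
      omega
    · have hv : ¬ (x.val + 1 = j.val) := fun hh => h1 (Fin.ext (by rw [hx1]; exact hh))
      have h2 : x + 1 ≠ j + 1 := fun hh => hxj (add_right_cancel hh)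
      rw [Equiv.swap_apply_of_ne_of_ne h1 h2, if_neg hv, hx1]

noncomputable def aPt {n : ℕ} (σ : Equiv.Perm (Fin (n + 1))) (h : 2 ≤ (Fset σ).card) :
    Fin (n + 1) :=
  (Fset σ).min' (Finset.card_pos.mp (by omega))

noncomputable def bPt {n : ℕ} (σ : Equiv.Perm (Fin (n + 1))) (h : 2 ≤ (Fset σ).card) :
    Fin (n + 1) :=
  ((Fset σ).erase (aPt σ h)).min' (Finset.card_pos.mp (by
    rw [Finset.card_erase_of_mem (show aPt σ h ∈ Fset σ from Finset.min'_mem _ _)]; omega))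

lemma min'_congr' {α : Type*} [LinearOrder α] {s t : Finset α} (h : s = t)
    {hs : s.Nonempty} {ht : t.Nonempty} : s.min' hs = t.min' ht := by
  subst h; rfl

lemma aPt_congr {n : ℕ} {σ τ : Equiv.Perm (Fin (n + 1))} (hEq : Fset σ = Fset τ)
    (hσ : 2 ≤ (Fset σ).card) (hτ : 2 ≤ (Fset τ).card) : aPt σ hσ = aPt τ hτ := by
  unfold aPt
  exact min'_congr' hEq

lemma bPt_congr {n : ℕ} {σ τ : Equiv.Perm (Fin (n + 1))} (hEq : Fset σ = Fset τ)
    (hσ : 2 ≤ (Fset σ).card) (hτ : 2 ≤ (Fset τ).card) : bPt σ hσ = bPt τ hτ := by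
  unfold bPt
  exact min'_congr' (by rw [hEq, aPt_congr hEq hσ hτ])

lemma aPt_mem {n : ℕ} (σ : Equiv.Perm (Fin (n + 1))) (h : 2 ≤ (Fset σ).card) :
    aPt σ h ∈ Fset σ := Finset.min'_mem _ _

lemma bPt_mem_erase {n : ℕ} (σ : Equiv.Perm (Fin (n + 1))) (h : 2 ≤ (Fset σ).card) :
    bPt σ h ∈ (Fset σ).erase (aPt σ h) := Finset.min'_mem _ _

lemma bPt_mem {n : ℕ} (σ : Equiv.Perm (Fin (n + 1))) (h : 2 ≤ (Fset σ).card) :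
    bPt σ h ∈ Fset σ := Finset.mem_of_mem_erase (bPt_mem_erase σ h)

lemma bPt_ne_aPt {n : ℕ} (σ : Equiv.Perm (Fin (n + 1))) (h : 2 ≤ (Fset σ).card) :
    bPt σ h ≠ aPt σ h := Finset.ne_of_mem_erase (bPt_mem_erase σ h)

lemma cyc_swap_sum {n : ℕ} (σ : Equiv.Perm (Fin (n + 1))) {a b : Fin (n + 1)} (hab : a ≠ b) :
    (-1 : ℤ) ^ cyc σ + (-1 : ℤ) ^ cyc (σ * Equiv.swap a b) = 0 := by
  rw [neg_one_pow_cyc, neg_one_pow_cyc, Equiv.Perm.sign_mul, Equiv.Perm.sign_swap hab]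
  push_cast
  ring

open scoped Classical in
lemma two_le_of_mem {n : ℕ} {σ : Equiv.Perm (Fin (n + 1))}
    (hσ : σ ∈ (Qhat n).filter (fun σ => ¬ (Fset σ).card ≤ 1)) : 2 ≤ (Fset σ).card := by
  have := (Finset.mem_filter.1 hσ).2
  omega

theorem sum_cyc_sign (n : ℕ) (hn : 2 ≤ n) :
    ∑ σ ∈ Qhat n, (-1 : ℤ) ^ cyc σ = (n : ℤ) - 1 := by
  classical
  obtain ⟨m, rfl⟩ : ∃ m, n = m + 2 := ⟨n - 2, by omega⟩
  rw [← Finset.sum_filter_add_sum_filter_not (Qhat (m + 2)) (fun σ => (Fset σ).card ≤ 1)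
    (fun σ => (-1 : ℤ) ^ cyc σ)]
  have hzero : ∑ σ ∈ (Qhat (m + 2)).filter (fun σ => ¬ (Fset σ).card ≤ 1),
      (-1 : ℤ) ^ cyc σ = 0 := by
    refine Finset.sum_involution
      (fun σ hσ => σ * Equiv.swap (aPt σ (two_le_of_mem hσ)) (bPt σ (two_le_of_mem hσ)))
      (fun σ hσ => cyc_swap_sum σ (Ne.symm (bPt_ne_aPt σ (two_le_of_mem hσ))))
      (fun σ hσ _ => ?_) (fun σ hσ => ?_) (fun σ hσ => ?_)
    · intro hEq
      have h2 := DFunLike.congr_fun hEq (aPt σ (two_le_of_mem hσ))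
      rw [Equiv.Perm.mul_apply, Equiv.swap_apply_left] at h2
      exact bPt_ne_aPt σ (two_le_of_mem hσ) (σ.injective h2)
    · have hQ := (Finset.mem_filter.1 hσ).1
      have hc := (Finset.mem_filter.1 hσ).2
      refine Finset.mem_filter.2 ⟨Qhat_mul_swap hQ (aPt_mem _ _) (bPt_mem _ _), ?_⟩
      rw [Fset_mul_swap (aPt_mem _ _) (bPt_mem _ _)]
      exact hc
    · have h := two_le_of_mem hσ
      have hFs : Fset (σ * Equiv.swap (aPt σ h) (bPt σ h)) = Fset σ :=
        Fset_mul_swap (aPt_mem _ _) (bPt_mem _ _)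
      have h' : 2 ≤ (Fset (σ * Equiv.swap (aPt σ h) (bPt σ h))).card := by rw [hFs]; exact h
      rw [aPt_congr hFs h' h, bPt_congr hFs h' h, mul_assoc, Equiv.swap_mul_self, mul_one]
  have hs1 : (Qhat (m + 2)).filter (fun σ => (Fset σ).card ≤ 1)
      = insert (finRotate (m + 3))
          ((Finset.univ.erase (Fin.last (m + 2))).image sigP) := by
    ext σ
    simp only [Finset.mem_filter, Finset.mem_insert, Finset.mem_image, Finset.mem_erase,
      Finset.mem_univ, and_true]
    constructor
    · rintro ⟨hσ, hcard⟩
      rcases Nat.le_one_iff_eq_zero_or_eq_one.1 hcard with h0 | h1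
      · exact Or.inl (uniq_full hσ (Finset.card_eq_zero.1 h0))
      · obtain ⟨j, hj⟩ := Finset.card_eq_one.1 h1
        obtain ⟨hjL, rfl⟩ := uniq_sig hσ hj
        exact Or.inr ⟨j, hjL, rfl⟩
    · rintro (rfl | ⟨j, hjL, rfl⟩)
      · exact ⟨full_mem, by rw [Fset_full]; simp⟩
      · exact ⟨sigP_mem hjL, by rw [Fset_sigP hjL]; simp⟩
  have hnotmem : finRotate (m + 3) ∉ (Finset.univ.erase (Fin.last (m + 2))).image sigP := by
    rw [Finset.mem_image]
    rintro ⟨j, -, hEq⟩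
    have h2 := DFunLike.congr_fun hEq j
    rw [sigP_apply_self, finRotate_succ_apply] at h2
    exact fin_add_one_ne j h2.symm
  have hinj : ∀ x ∈ Finset.univ.erase (Fin.last (m + 2)),
      ∀ y ∈ Finset.univ.erase (Fin.last (m + 2)), sigP x = sigP y → x = y := by
    intro x _ y _ hEq
    by_contra hne
    have h2 := DFunLike.congr_fun hEq y
    rw [sigP_apply_self] at h2
    exact sigP_ne (fun hh => hne hh.symm) h2
  have hfull : (-1 : ℤ) ^ cyc (finRotate (m + 3)) = -1 := by
    rw [neg_one_pow_cyc]
    have : Equiv.Perm.sign (finRotate (m + 3)) = (-1 : ℤˣ) ^ (m + 2) := sign_finRotate (m + 3)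
    rw [this]
    push_cast
    rw [← pow_add]
    exact Odd.neg_one_pow ⟨m + 2, by ring⟩
  have hsig : ∀ j : Fin (m + 3), (-1 : ℤ) ^ cyc (sigP j) = 1 := by
    intro j
    rw [neg_one_pow_cyc, sigP, Equiv.Perm.sign_mul,
      Equiv.Perm.sign_swap (Ne.symm (fin_add_one_ne j)), sign_finRotate]
    push_cast
    rw [show (-1 : ℤ) * (-1 : ℤ) ^ (m + 2) = (-1 : ℤ) ^ (m + 3) from by rw [pow_succ]; ring,
      ← pow_add]
    exact Even.neg_one_pow ⟨m + 3, by ring⟩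
  rw [hzero, add_zero, hs1, Finset.sum_insert hnotmem, Finset.sum_image hinj, hfull]
  have hsum : ∑ j ∈ Finset.univ.erase (Fin.last (m + 2)), (-1 : ℤ) ^ cyc (sigP j)
      = (m + 2 : ℤ) := by
    rw [Finset.sum_congr rfl (fun j _ => hsig j), Finset.sum_const,
      Finset.card_erase_of_mem (Finset.mem_univ _), Finset.card_univ, Fintype.card_fin]
    push_cast
    ring
  rw [hsum]
  push_cast
  ring
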